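/- Let p be an odd prime, k ≥ 1 an odd integer, and D > 0 a nonsquare integer which is a nonzero square modulo p. For each integer n ≥ 0 let S_n be the set of triples Q = [A,B,C] ∈ ℤ³ with B² − 4AC = D·p^{2n}, AC < 0, and not all of A, B, C divisible by p. Then: (i) each S_n is a finite set; (ii) for every integer h ≥ 0 and every z ∈ H_p^{≤h} and every Q ∈ ⋃_n S_n one has Q(z,1) ≠ 0; and (iii) for every h ≥ 0 the sequence of partial sums F_N(z) = Σ_{n=0}^{N} p^{nk} Σ_{Q∈S_n} sgn(A)·Q(z,1)^{−k} converges uniformly on H_p^{≤h} as N → ∞ (with respect to the sup norm of |·| on H_p^{≤h}). -/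

import Mathlib

open Filter

/-- The affinoid subdomain `H_p^{≤n}` of the `p`-adic upper half-plane:
the set of `z ∈ ℂ_p` with `‖z‖ ≤ p^n` and `‖z − t‖ ≥ p^(−n)` for every `t ∈ ℚ_p`.
Here `ℂ_p` is modelled by a normed field `K` with a `ℚ_[p]`-algebra structure. -/
def affinoid (p : ℕ) [Fact p.Prime] (K : Type*) [NormedField K] [Algebra ℚ_[p] K]
    (n : ℕ) : Set K :=
  {z | ‖z‖ ≤ (p : ℝ) ^ n ∧ ∀ t : ℚ_[p], ((p : ℝ) ^ n)⁻¹ ≤ ‖z - algebraMap ℚ_[p] K t‖}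

/-- The set `S_n` of simple forms: triples `Q = [A,B,C] ∈ ℤ³` with
`B² − 4AC = D·p^(2n)`, `AC < 0`, and not all of `A, B, C` divisible by `p`. -/
def quadSet (p : ℕ) (D : ℤ) (n : ℕ) : Set (ℤ × ℤ × ℤ) :=
  {Q | Q.2.1 ^ 2 - 4 * Q.1 * Q.2.2 = D * (p : ℤ) ^ (2 * n) ∧ Q.1 * Q.2.2 < 0 ∧
    ¬ ((p : ℤ) ∣ Q.1 ∧ (p : ℤ) ∣ Q.2.1 ∧ (p : ℤ) ∣ Q.2.2)}

/-- Each `S_n` is finite. -/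
lemma quadSet_finite (p : ℕ) (D : ℤ) (n : ℕ) : (quadSet p D n).Finite := by
  classical
  set E : ℤ := D * (p : ℤ) ^ (2 * n) with hE
  have hsub : ∀ Q ∈ quadSet p D n, Q.1 ∈ Set.Icc (-E) E ∧ Q.2.1 ∈ Set.Icc (-E) E := by
    rintro ⟨A, B, C⟩ ⟨hdisc, hAC, -⟩
    have hB2 : B ^ 2 < E := by nlinarith [sq_nonneg B]
    have hBabs : |B| ≤ B ^ 2 := by
      have h1 : |B| ≤ |B| ^ 2 := by nlinarith [abs_nonneg B]
      simpa [sq_abs] using h1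
    have hBmem : B ∈ Set.Icc (-E) E := by
      rw [Set.mem_Icc, ← abs_le]
      exact hBabs.trans hB2.le
    have hdvd : A ∣ (E - B ^ 2) := ⟨-(4 * C), by linarith⟩
    have hApos : 0 < E - B ^ 2 := by linarith
    have hAle : |A| ≤ E - B ^ 2 := Int.le_of_dvd hApos ((abs_dvd _ _).mpr hdvd)
    have hB2nonneg : 0 ≤ B ^ 2 := sq_nonneg B
    have hAmem : A ∈ Set.Icc (-E) E := by
      rw [Set.mem_Icc, ← abs_le]
      linarith
    exact ⟨hAmem, hBmem⟩
  apply Set.Finite.of_finite_image (f := fun Q : ℤ × ℤ × ℤ => (Q.1, Q.2.1))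
  · apply Set.Finite.subset ((Set.finite_Icc (-E) E).prod (Set.finite_Icc (-E) E))
    rintro ⟨a, b⟩ ⟨Q, hQ, hab⟩
    obtain ⟨h1, h2⟩ := hsub Q hQ
    simp only [Prod.mk.injEq] at hab
    exact Set.mem_prod.mpr ⟨hab.1 ▸ h1, hab.2 ▸ h2⟩
  · rintro ⟨A, B, C⟩ hQ ⟨A', B', C'⟩ hQ' heq
    simp only [Prod.mk.injEq] at heq
    obtain ⟨rfl, rfl⟩ : A = A' ∧ B = B' := ⟨heq.1, heq.2⟩
    obtain ⟨hd, hAC, -⟩ := hQ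
    obtain ⟨hd', -, -⟩ := hQ'
    have hA0 : A ≠ 0 := by
      rintro rfl; simp at hAC
    have : C = C' := by
      have h4 : 4 * A * C = 4 * A * C' := by linarith
      have := mul_left_cancel₀ (show (4 : ℤ) * A ≠ 0 by simp [hA0]) h4
      exact this
    simp [this]

/-- A square root of `D` in `ℚ_p`, via Hensel's lemma. -/
lemma exists_padic_sqrt (p : ℕ) [Fact p.Prime] (hp : p ≠ 2) (D : ℤ)
    (h1 : IsSquare (D : ZMod p)) (h2 : (D : ZMod p) ≠ 0) :
    ∃ s : ℚ_[p], s ^ 2 = (D : ℚ_[p]) := by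
  obtain ⟨r, hr⟩ := h1
  set F : Polynomial ℤ_[p] := Polynomial.X ^ 2 - Polynomial.C ((D : ℤ_[p])) with hF
  set a : ℤ_[p] := (((r.val : ℤ)) : ℤ_[p]) with ha
  have hFeval : ∀ x : ℤ_[p], F.eval x = x ^ 2 - (D : ℤ_[p]) := fun x => by simp [hF]
  have hFder : ∀ x : ℤ_[p], F.derivative.eval x = 2 * x := fun x => by
    simp [hF, Polynomial.derivative_X_pow, one_add_one_eq_two]
  have hdvdZ : (p : ℤ) ∣ ((r.val : ℤ) ^ 2 - D) := by
    rw [← ZMod.intCast_zmod_eq_zero_iff_dvd]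
    push_cast
    rw [ZMod.natCast_val, ZMod.cast_id, hr]
    ring
  have hevalnorm : ‖F.eval a‖ < 1 := by
    rw [hFeval]
    have hcast : a ^ 2 - (D : ℤ_[p]) = (((r.val : ℤ) ^ 2 - D : ℤ) : ℤ_[p]) := by
      rw [ha]; push_cast; ring
    rw [hcast, PadicInt.norm_int_lt_one_iff_dvd]
    exact hdvdZ
  have hr0 : r ≠ 0 := by
    rintro rfl; rw [mul_zero] at hr; exact h2 hr
  have hndvd : ¬ ((p : ℤ) ∣ (r.val : ℤ)) := by
    intro hd
    have h0 : ((r.val : ℤ) : ZMod p) = 0 := by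
      rw [ZMod.intCast_zmod_eq_zero_iff_dvd]; exact hd
    rw [Int.cast_natCast, ZMod.natCast_val, ZMod.cast_id] at h0
    exact hr0 h0
  have hanorm : ‖a‖ = 1 := by
    have hnlt : ¬ ‖a‖ < 1 := by
      rw [ha, PadicInt.norm_int_lt_one_iff_dvd]; exact hndvd
    exact le_antisymm (PadicInt.norm_le_one a) (not_lt.mp hnlt)
  have h2norm : ‖(2 : ℤ_[p])‖ = 1 := by
    have hnd2 : ¬ ((p : ℤ) ∣ (2 : ℤ)) := by
      intro hd
      have hple : p ≤ 2 := by
        have := Int.le_of_dvd (by norm_num) hd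
        exact_mod_cast this
      have := (Fact.out : p.Prime).two_le
      omega
    have hnlt : ¬ ‖((2 : ℤ) : ℤ_[p])‖ < 1 := by
      rw [PadicInt.norm_int_lt_one_iff_dvd]; exact hnd2
    have h22 : ((2 : ℤ) : ℤ_[p]) = (2 : ℤ_[p]) := by norm_num
    rw [h22] at hnlt
    exact le_antisymm (PadicInt.norm_le_one _) (not_lt.mp hnlt)
  have hdernorm : ‖F.derivative.eval a‖ = 1 := by
    rw [hFder, norm_mul, hanorm, h2norm, mul_one]
  have hnorm : ‖F.eval a‖ < ‖F.derivative.eval a‖ ^ 2 := by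
    rw [hdernorm, one_pow]; exact hevalnorm
  obtain ⟨z, hz, -⟩ := hensels_lemma hnorm
  rw [Polynomial.coe_aeval_eq_eval, hFeval] at hz
  refine ⟨(z : ℚ_[p]), ?_⟩
  have hz2 : (z ^ 2 : ℤ_[p]) = (D : ℤ_[p]) := by linear_combination hz
  calc ((z : ℚ_[p])) ^ 2 = ((z ^ 2 : ℤ_[p]) : ℚ_[p]) := by push_cast; ring
    _ = (((D : ℤ_[p]) : ℚ_[p])) := by rw [hz2]
    _ = (D : ℚ_[p]) := by push_cast; ring

/-- Let `p` be an odd prime, `k ≥ 1` odd, and `D > 0` a nonsquare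
integer which is a nonzero square mod `p`.  Then: (i) each `S_n` is finite;
(ii) `Q(z,1) ≠ 0` for `z ∈ H_p^{≤h}` and `Q ∈ ⋃ S_n`; (iii) for every `h ≥ 0` the
partial sums `F_N(z) = Σ_{n=0}^N p^{nk} Σ_{Q∈S_n} sgn(A)·Q(z,1)^{−k}` converge
uniformly on `H_p^{≤h}` as `N → ∞`.
Here `ℂ_p` is modelled by a complete algebraically closed normed field `K` equipped
with an isometric `ℚ_[p]`-algebra structure. -/
theorem stmt1 (p : ℕ) [Fact p.Prime] (hp : p ≠ 2)
    (K : Type*) [NormedField K] [Algebra ℚ_[p] K] [IsAlgClosed K] [CompleteSpace K]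
    (hK : ∀ x : ℚ_[p], ‖algebraMap ℚ_[p] K x‖ = ‖x‖)
    (k : ℕ) (hk : 1 ≤ k) (hkodd : Odd k)
    (D : ℤ) (hD : 0 < D) (hDns : ¬ IsSquare D)
    (hDp : IsSquare (D : ZMod p) ∧ (D : ZMod p) ≠ 0) :
    (∀ n : ℕ, (quadSet p D n).Finite) ∧
    (∀ h : ℕ, ∀ z ∈ affinoid p K h, ∀ n : ℕ, ∀ Q ∈ quadSet p D n,
      (Q.1 : K) * z ^ 2 + (Q.2.1 : K) * z + (Q.2.2 : K) ≠ 0) ∧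
    (∀ h : ℕ, ∃ g : K → K,
      TendstoUniformlyOn
        (fun (N : ℕ) (z : K) => ∑ n ∈ Finset.range (N + 1), (p : K) ^ (n * k) *
          ∑' Q : quadSet p D n,
            (((Q : ℤ × ℤ × ℤ).1.sign : ℤ) : K) *
              (((Q : ℤ × ℤ × ℤ).1 : K) * z ^ 2 + ((Q : ℤ × ℤ × ℤ).2.1 : K) * z +
                ((Q : ℤ × ℤ × ℤ).2.2 : K)) ^ (-(k : ℤ)))
        g atTop (affinoid p K h)) := by
  classical
  have hfin : ∀ n : ℕ, (quadSet p D n).Finite := fun n => quadSet_finite p D n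
  have hp1 : (1 : ℝ) < p := by exact_mod_cast (Fact.out : p.Prime).one_lt
  have hp0 : (0 : ℝ) < p := lt_trans one_pos hp1
  -- norms of integers in K
  have hnormInt : ∀ m : ℤ, ‖(m : K)‖ = ‖(m : ℚ_[p])‖ := by
    intro m
    rw [← map_intCast (algebraMap ℚ_[p] K) m, hK]
  have hnormNat : ∀ m : ℕ, ‖(m : K)‖ ≤ 1 := by
    intro m
    have := hnormInt (m : ℤ)
    push_cast at this
    rw [this]
    exact_mod_cast Padic.norm_int_le_one (m : ℤ)
  haveI : IsUltrametricDist K := IsUltrametricDist.isUltrametricDist_of_forall_norm_natCast_le_one hnormNat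
  obtain ⟨sD, hsD⟩ := exists_padic_sqrt p hp D hDp.1 hDp.2
  -- the key norm lower bound
  have key : ∀ (h : ℕ), ∀ z ∈ affinoid p K h, ∀ (n : ℕ), ∀ Q ∈ quadSet p D n,
      ((p : ℝ) ^ (4 * h))⁻¹ ≤ ‖(Q.1 : K) * z ^ 2 + (Q.2.1 : K) * z + (Q.2.2 : K)‖ := by
    rintro h z ⟨hz1, hz2⟩ n ⟨A, B, C⟩ ⟨hdisc, hAC, hndvd⟩
    simp only at hdisc hAC hndvd
    show ((p : ℝ) ^ (4 * h))⁻¹ ≤ ‖(A : K) * z ^ 2 + (B : K) * z + (C : K)‖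
    have hA0 : A ≠ 0 := by rintro rfl; simp at hAC
    have hAQ : (A : ℚ_[p]) ≠ 0 := Int.cast_ne_zero.mpr hA0
    have h2A : ((2 : ℚ_[p]) * A) ≠ 0 := mul_ne_zero two_ne_zero hAQ
    set t : ℚ_[p] := (p : ℚ_[p]) ^ n * sD with htdef
    have ht2 : t ^ 2 = (B : ℚ_[p]) ^ 2 - 4 * A * C := by
      have hcast : (B : ℚ_[p]) ^ 2 - 4 * (A : ℚ_[p]) * (C : ℚ_[p])
          = (D : ℚ_[p]) * (p : ℚ_[p]) ^ (2 * n) := by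
        exact_mod_cast congrArg (Int.cast : ℤ → ℚ_[p]) hdisc
      rw [htdef, mul_pow, ← pow_mul, hsD, hcast]
      ring
    set r₁ : ℚ_[p] := (-B + t) / (2 * A) with hr₁
    set r₂ : ℚ_[p] := (-B - t) / (2 * A) with hr₂
    have vieta1 : (A : ℚ_[p]) * (r₁ + r₂) = -B := by
      rw [hr₁, hr₂]; field_simp; ring
    have vieta2 : (A : ℚ_[p]) * (r₁ * r₂) = C := by
      rw [hr₁, hr₂]
      field_simp
      linear_combination (-1 : ℚ_[p]) * ht2
    set ρ₁ : K := algebraMap ℚ_[p] K r₁ with hρ₁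
    set ρ₂ : K := algebraMap ℚ_[p] K r₂ with hρ₂
    have e1 : (A : K) * (ρ₁ + ρ₂) = -(B : K) := by
      have := congrArg (algebraMap ℚ_[p] K) vieta1
      simpa [map_mul, map_add, map_neg, map_intCast] using this
    have e2 : (A : K) * (ρ₁ * ρ₂) = (C : K) := by
      have := congrArg (algebraMap ℚ_[p] K) vieta2
      simpa [map_mul, map_add, map_intCast] using this
    have hfact : (A : K) * z ^ 2 + (B : K) * z + (C : K)
        = (A : K) * ((z - ρ₁) * (z - ρ₂)) := by
      linear_combination z * e1 - e2
    -- lower bound for each factor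
    have hq0 : (0 : ℝ) < ((p : ℝ) ^ h)⁻¹ := by positivity
    have hfactor : ∀ r : ℚ_[p],
        (((p : ℝ) ^ h)⁻¹) ^ 2 * max 1 ‖r‖ ≤ ‖z - algebraMap ℚ_[p] K r‖ := by
      intro r
      rcases le_or_gt ‖r‖ ((p : ℝ) ^ h) with hle | hlt
      · have hmaxle : max 1 ‖r‖ ≤ (p : ℝ) ^ h := max_le (one_le_pow₀ hp1.le) hle
        calc (((p : ℝ) ^ h)⁻¹) ^ 2 * max 1 ‖r‖
            ≤ (((p : ℝ) ^ h)⁻¹) ^ 2 * (p : ℝ) ^ h := by gcongr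
          _ = ((p : ℝ) ^ h)⁻¹ := by
              rw [show (((p : ℝ) ^ h)⁻¹) ^ 2 * (p : ℝ) ^ h
                  = ((p : ℝ) ^ h)⁻¹ * (((p : ℝ) ^ h)⁻¹ * (p : ℝ) ^ h) by ring,
                inv_mul_cancel₀ (show ((p : ℝ) ^ h) ≠ 0 by positivity), mul_one]
          _ ≤ ‖z - algebraMap ℚ_[p] K r‖ := hz2 r
      · have hρK : ‖algebraMap ℚ_[p] K r‖ = ‖r‖ := hK r
        have hzlt : ‖z‖ < ‖r‖ := lt_of_le_of_lt hz1 hlt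
        have step : ‖r‖ ≤ max ‖algebraMap ℚ_[p] K r - z‖ ‖z‖ := by
          rw [← hρK]
          calc ‖algebraMap ℚ_[p] K r‖ = ‖(algebraMap ℚ_[p] K r - z) + z‖ := by
                rw [sub_add_cancel]
            _ ≤ _ := IsUltrametricDist.norm_add_le_max _ _
        have hge : ‖r‖ ≤ ‖z - algebraMap ℚ_[p] K r‖ := by
          rcases le_max_iff.mp step with h' | h'
          · rwa [norm_sub_rev] at h'
          · exact absurd h' (not_le.mpr hzlt)
        have hmaxr : max 1 ‖r‖ = ‖r‖ :=
          max_eq_right (le_of_lt (lt_of_le_of_lt (one_le_pow₀ hp1.le) hlt))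
        have hle1 : (((p : ℝ) ^ h)⁻¹) ^ 2 ≤ 1 := by
          have h1 : ((p : ℝ) ^ h)⁻¹ ≤ 1 := inv_le_one_of_one_le₀ (one_le_pow₀ hp1.le)
          nlinarith [hq0.le]
        calc (((p : ℝ) ^ h)⁻¹) ^ 2 * max 1 ‖r‖ ≤ 1 * ‖r‖ := by
              rw [hmaxr]
              exact mul_le_mul hle1 le_rfl (norm_nonneg _) zero_le_one
          _ = ‖r‖ := one_mul _
          _ ≤ ‖z - algebraMap ℚ_[p] K r‖ := hge
    -- Gauss norm lower bound: |A| * max(1,|r₁|) * max(1,|r₂|) ≥ 1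
    have hu : (1 : ℝ) ≤ max 1 ‖r₁‖ := le_max_left _ _
    have hv : (1 : ℝ) ≤ max 1 ‖r₂‖ := le_max_left _ _
    have hgauss : 1 ≤ ‖(A : ℚ_[p])‖ * (max 1 ‖r₁‖ * max 1 ‖r₂‖) := by
      have huv : (1 : ℝ) ≤ max 1 ‖r₁‖ * max 1 ‖r₂‖ := le_trans hu (le_mul_of_one_le_right (by linarith) hv)
      have hnormA : ‖(A : ℚ_[p])‖ ≤ ‖(A : ℚ_[p])‖ * (max 1 ‖r₁‖ * max 1 ‖r₂‖) :=
        le_mul_of_one_le_right (norm_nonneg _) huv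
      have hnormB : ‖(B : ℚ_[p])‖ ≤ ‖(A : ℚ_[p])‖ * (max 1 ‖r₁‖ * max 1 ‖r₂‖) := by
        have hBeq : (B : ℚ_[p]) = -((A : ℚ_[p]) * (r₁ + r₂)) := by rw [vieta1]; ring
        rw [hBeq, norm_neg, norm_mul]
        gcongr
        refine le_trans (Padic.nonarchimedean r₁ r₂) (max_le ?_ ?_)
        · calc ‖r₁‖ ≤ max 1 ‖r₁‖ := le_max_right _ _
            _ ≤ max 1 ‖r₁‖ * max 1 ‖r₂‖ := le_mul_of_one_le_right (by linarith) hv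
        · calc ‖r₂‖ ≤ max 1 ‖r₂‖ := le_max_right _ _
            _ ≤ max 1 ‖r₁‖ * max 1 ‖r₂‖ := le_mul_of_one_le_left (by linarith) hu
      have hnormC : ‖(C : ℚ_[p])‖ ≤ ‖(A : ℚ_[p])‖ * (max 1 ‖r₁‖ * max 1 ‖r₂‖) := by
        have hCeq : (C : ℚ_[p]) = (A : ℚ_[p]) * (r₁ * r₂) := vieta2.symm
        rw [hCeq, norm_mul, norm_mul]
        gcongr
        · exact le_max_right _ _
        · exact le_max_right _ _
      have hone : 1 ≤ ‖(A : ℚ_[p])‖ ∨ 1 ≤ ‖(B : ℚ_[p])‖ ∨ 1 ≤ ‖(C : ℚ_[p])‖ := by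
        by_contra hcon
        push_neg at hcon
        exact hndvd ⟨(Padic.norm_intCast_lt_one_iff (k := A)).mp hcon.1,
          (Padic.norm_intCast_lt_one_iff (k := B)).mp hcon.2.1,
          (Padic.norm_intCast_lt_one_iff (k := C)).mp hcon.2.2⟩
      rcases hone with h' | h' | h'
      · exact h'.trans hnormA
      · exact h'.trans hnormB
      · exact h'.trans hnormC
    -- assemble
    have hAK : ‖(A : K)‖ = ‖(A : ℚ_[p])‖ := hnormInt A
    have hpow : ((p : ℝ) ^ (4 * h))⁻¹
        = ((((p : ℝ) ^ h)⁻¹) ^ 2 * (((p : ℝ) ^ h)⁻¹) ^ 2) := by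
      rw [show (4 : ℕ) * h = h * 4 by ring, pow_mul]
      rw [← inv_pow]
      ring
    calc ((p : ℝ) ^ (4 * h))⁻¹
        = ((((p : ℝ) ^ h)⁻¹) ^ 2 * (((p : ℝ) ^ h)⁻¹) ^ 2) * 1 := by rw [hpow, mul_one]
      _ ≤ ((((p : ℝ) ^ h)⁻¹) ^ 2 * (((p : ℝ) ^ h)⁻¹) ^ 2) *
            (‖(A : ℚ_[p])‖ * (max 1 ‖r₁‖ * max 1 ‖r₂‖)) :=
          mul_le_mul_of_nonneg_left hgauss (by positivity)
      _ = ‖(A : ℚ_[p])‖ * (((((p : ℝ) ^ h)⁻¹) ^ 2 * max 1 ‖r₁‖)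
            * ((((p : ℝ) ^ h)⁻¹) ^ 2 * max 1 ‖r₂‖)) := by ring
      _ ≤ ‖(A : ℚ_[p])‖ * (‖z - ρ₁‖ * ‖z - ρ₂‖) := by
          refine mul_le_mul_of_nonneg_left ?_ (norm_nonneg _)
          exact mul_le_mul (hfactor r₁) (hfactor r₂) (by positivity) (norm_nonneg _)
      _ = ‖(A : K) * ((z - ρ₁) * (z - ρ₂))‖ := by
          rw [norm_mul, norm_mul, hAK]
      _ = ‖(A : K) * z ^ 2 + (B : K) * z + (C : K)‖ := by rw [← hfact]
  -- part (ii)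
  have part2 : ∀ h : ℕ, ∀ z ∈ affinoid p K h, ∀ n : ℕ, ∀ Q ∈ quadSet p D n,
      (Q.1 : K) * z ^ 2 + (Q.2.1 : K) * z + (Q.2.2 : K) ≠ 0 := by
    intro h z hz n Q hQ heq
    have h1 := key h z hz n Q hQ
    rw [heq, norm_zero] at h1
    have h2 : (0 : ℝ) < ((p : ℝ) ^ (4 * h))⁻¹ := by positivity
    linarith
  refine ⟨hfin, part2, ?_⟩
  -- part (iii)
  intro h
  have hppow : ‖(p : K)‖ = (p : ℝ)⁻¹ := by
    rw [← map_natCast (algebraMap ℚ_[p] K) p, hK, Padic.norm_p]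
  set f : ℕ → K → K := fun n z => (p : K) ^ (n * k) *
    ∑' Q : quadSet p D n,
      (((Q : ℤ × ℤ × ℤ).1.sign : ℤ) : K) *
        (((Q : ℤ × ℤ × ℤ).1 : K) * z ^ 2 + ((Q : ℤ × ℤ × ℤ).2.1 : K) * z +
          ((Q : ℤ × ℤ × ℤ).2.2 : K)) ^ (-(k : ℤ)) with hfdef
  have hCpos : (0 : ℝ) < (p : ℝ) ^ (4 * h * k) := by positivity
  set Cb : ℝ := (p : ℝ) ^ (4 * h * k) with hCb
  set rr : ℝ := ((p : ℝ) ^ k)⁻¹ with hrr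
  have hrr0 : (0 : ℝ) ≤ rr := by positivity
  have hrr1 : rr < 1 := by
    rw [hrr, inv_lt_one_iff₀]
    right
    exact one_lt_pow₀ hp1 (by omega)
  -- the term bound
  have hterm : ∀ n : ℕ, ∀ z ∈ affinoid p K h, ‖f n z‖ ≤ Cb * rr ^ n := by
    intro n z hz
    have htsum : ‖∑' Q : quadSet p D n,
        (((Q : ℤ × ℤ × ℤ).1.sign : ℤ) : K) *
          (((Q : ℤ × ℤ × ℤ).1 : K) * z ^ 2 + ((Q : ℤ × ℤ × ℤ).2.1 : K) * z +
            ((Q : ℤ × ℤ × ℤ).2.2 : K)) ^ (-(k : ℤ))‖ ≤ Cb := by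
      haveI : Fintype (quadSet p D n) := (hfin n).fintype
      rw [tsum_fintype]
      refine IsUltrametricDist.norm_sum_le_of_forall_le_of_nonneg hCpos.le ?_
      intro Q _
      rw [norm_mul, norm_zpow]
      have hQz := key h z hz n Q.1 Q.2
      have hlow : (0 : ℝ) < ((p : ℝ) ^ (4 * h))⁻¹ := by positivity
      have hsgn : ‖(((Q : ℤ × ℤ × ℤ).1.sign : ℤ) : K)‖ ≤ 1 := by
        rw [hnormInt]
        exact Padic.norm_int_le_one _
      have hzp : ‖((Q : ℤ × ℤ × ℤ).1 : K) * z ^ 2 + ((Q : ℤ × ℤ × ℤ).2.1 : K) * z +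
          ((Q : ℤ × ℤ × ℤ).2.2 : K)‖ ^ (-(k : ℤ)) ≤ Cb := by
        rw [zpow_neg, zpow_natCast]
        have h1 : (((p : ℝ) ^ (4 * h))⁻¹) ^ k ≤ ‖((Q : ℤ × ℤ × ℤ).1 : K) * z ^ 2 +
            ((Q : ℤ × ℤ × ℤ).2.1 : K) * z + ((Q : ℤ × ℤ × ℤ).2.2 : K)‖ ^ k :=
          pow_le_pow_left₀ hlow.le hQz k
        have h2 : (‖((Q : ℤ × ℤ × ℤ).1 : K) * z ^ 2 + ((Q : ℤ × ℤ × ℤ).2.1 : K) * z +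
            ((Q : ℤ × ℤ × ℤ).2.2 : K)‖ ^ k)⁻¹ ≤ ((((p : ℝ) ^ (4 * h))⁻¹) ^ k)⁻¹ :=
          inv_anti₀ (by positivity) h1
        refine h2.trans ?_
        rw [hCb, ← inv_pow, inv_inv, ← pow_mul]
      calc ‖(((Q : ℤ × ℤ × ℤ).1.sign : ℤ) : K)‖ *
            ‖((Q : ℤ × ℤ × ℤ).1 : K) * z ^ 2 + ((Q : ℤ × ℤ × ℤ).2.1 : K) * z +
              ((Q : ℤ × ℤ × ℤ).2.2 : K)‖ ^ (-(k : ℤ))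
          ≤ 1 * Cb :=
            mul_le_mul hsgn hzp (zpow_nonneg (norm_nonneg _) _) zero_le_one
        _ = Cb := one_mul _
    have hpn : ‖(p : K) ^ (n * k)‖ = rr ^ n := by
      rw [norm_pow, hppow, hrr, ← inv_pow, ← pow_mul, mul_comm k n]
    show ‖(p : K) ^ (n * k) * ∑' Q : quadSet p D n,
        (((Q : ℤ × ℤ × ℤ).1.sign : ℤ) : K) *
          (((Q : ℤ × ℤ × ℤ).1 : K) * z ^ 2 + ((Q : ℤ × ℤ × ℤ).2.1 : K) * z +
            ((Q : ℤ × ℤ × ℤ).2.2 : K)) ^ (-(k : ℤ))‖ ≤ Cb * rr ^ n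
    rw [norm_mul, hpn, mul_comm Cb (rr ^ n)]
    exact mul_le_mul_of_nonneg_left htsum (pow_nonneg hrr0 n)
  -- uniform Cauchy
  have hUC : UniformCauchySeqOn
      (fun (N : ℕ) (z : K) => ∑ n ∈ Finset.range (N + 1), f n z) atTop (affinoid p K h) := by
    rw [Metric.uniformCauchySeqOn_iff]
    intro ε hε
    obtain ⟨N, hN⟩ := exists_pow_lt_of_lt_one (show (0 : ℝ) < ε / Cb by positivity) hrr1
    have hNε : Cb * rr ^ N < ε := by
      rw [lt_div_iff₀ hCpos] at hN
      linarith [hN]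
    have aux : ∀ a b : ℕ, N ≤ a → a ≤ b → ∀ z ∈ affinoid p K h,
        ‖(∑ n ∈ Finset.range (b + 1), f n z) - ∑ n ∈ Finset.range (a + 1), f n z‖ < ε := by
      intro a b ha hab z hz
      rw [← Finset.sum_Ico_eq_sub _ (by omega)]
      have hbound : ‖∑ n ∈ Finset.Ico (a + 1) (b + 1), f n z‖ ≤ Cb * rr ^ N := by
        refine IsUltrametricDist.norm_sum_le_of_forall_le_of_nonneg (by positivity) ?_
        intro j hj
        rw [Finset.mem_Ico] at hj
        refine (hterm j z hz).trans ?_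
        have : rr ^ j ≤ rr ^ N := pow_le_pow_of_le_one hrr0 hrr1.le (by omega)
        gcongr
      exact lt_of_le_of_lt hbound hNε
    refine ⟨N, fun m hm n hn z hz => ?_⟩
    rcases le_total n m with hnm | hmn
    · rw [dist_eq_norm]
      exact aux n m hn hnm z hz
    · rw [dist_comm, dist_eq_norm]
      exact aux m n hm hmn z hz
  haveI : Nonempty K := ⟨0⟩
  refine ⟨fun z => limUnder atTop (fun N => ∑ n ∈ Finset.range (N + 1), f n z),
    hUC.tendstoUniformlyOn_of_tendsto ?_⟩
  intro z hz
  exact (hUC.cauchySeq hz).tendsto_limUnder
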